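/- Let f, g : ℝ → ℝ be measurable, square-integrable on [0,1], nonnegative on [0,1], with ∫₀¹ f = ∫₀¹ g = 1, and satisfying f(u) + g(v) ≥ 1 for all u, v ∈ [0,1]. Then for every measurable, square-integrable π : ℝ × ℝ → ℝ that is nonnegative on [0,1]² and satisfies the margin constraints ∫₀¹ π(u,v) dv = f(u) for almost every u ∈ [0,1] and ∫₀¹ π(u,v) du = g(v) for almost every v ∈ [0,1], one has ∫∫_{[0,1]²} π(u,v)² du dv ≥ ∫∫_{[0,1]²} (f(u) + g(v) − 1)² du dv. In other words, the continuous indetermination density c⁺(u,v) = f(u) + g(v) − 1 minimizes the squared cost among all densities on [0,1]² with margins f and g. -/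

import Mathlib

open MeasureTheory Set

private lemma abs_mul_le_half (a b : ℝ) : ‖a * b‖ ≤ (a^2 + b^2)/2 := by
  rw [Real.norm_eq_abs, abs_mul]
  nlinarith [sq_nonneg (|a| - |b|), sq_abs a, sq_abs b, abs_nonneg a, abs_nonneg b]

theorem continuous_indetermination_minimizes_square_cost
    (f g : ℝ → ℝ)
    (hf_meas : Measurable f) (hg_meas : Measurable g)
    (hf_sq : IntegrableOn (fun u => (f u)^2) (Icc (0:ℝ) 1))
    (hg_sq : IntegrableOn (fun v => (g v)^2) (Icc (0:ℝ) 1))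
    (hf_nonneg : ∀ u ∈ Icc (0:ℝ) 1, 0 ≤ f u)
    (hg_nonneg : ∀ v ∈ Icc (0:ℝ) 1, 0 ≤ g v)
    (hf_int : ∫ u in Icc (0:ℝ) 1, f u = 1)
    (hg_int : ∫ v in Icc (0:ℝ) 1, g v = 1)
    (hcond : ∀ u ∈ Icc (0:ℝ) 1, ∀ v ∈ Icc (0:ℝ) 1, 1 ≤ f u + g v)
    (π : ℝ × ℝ → ℝ)
    (hπ_meas : Measurable π)
    (hπ_sq : IntegrableOn (fun x => (π x)^2) (Icc (0:ℝ) 1 ×ˢ Icc (0:ℝ) 1))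
    (hπ_nonneg : ∀ x ∈ Icc (0:ℝ) 1 ×ˢ Icc (0:ℝ) 1, 0 ≤ π x)
    (hπ_row : ∀ᵐ u ∂(volume.restrict (Icc (0:ℝ) 1)),
      (∫ v in Icc (0:ℝ) 1, π (u, v)) = f u)
    (hπ_col : ∀ᵐ v ∂(volume.restrict (Icc (0:ℝ) 1)),
      (∫ u in Icc (0:ℝ) 1, π (u, v)) = g v) :
    ∫ x in Icc (0:ℝ) 1 ×ˢ Icc (0:ℝ) 1, (π x)^2
      ≥ ∫ x in Icc (0:ℝ) 1 ×ˢ Icc (0:ℝ) 1, (f x.1 + g x.2 - 1)^2 := by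
  set μ : Measure ℝ := volume.restrict (Icc (0:ℝ) 1) with hμ
  have hprob : IsProbabilityMeasure μ := by
    constructor
    rw [hμ, Measure.restrict_apply_univ, Real.volume_Icc]
    norm_num
  set P : Measure (ℝ × ℝ) := μ.prod μ with hP
  have hPP : (volume : Measure (ℝ × ℝ)).restrict (Icc (0:ℝ) 1 ×ˢ Icc (0:ℝ) 1) = P := by
    rw [hP, hμ, Measure.prod_restrict, ← Measure.volume_eq_prod]
  -- rewrite set integrals as integrals over P
  rw [show (∫ x in Icc (0:ℝ) 1 ×ˢ Icc (0:ℝ) 1, (π x)^2)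
      = ∫ x, (π x)^2 ∂P by rw [← hPP],
    show (∫ x in Icc (0:ℝ) 1 ×ˢ Icc (0:ℝ) 1, (f x.1 + g x.2 - 1)^2)
      = ∫ x, (f x.1 + g x.2 - 1)^2 ∂P by rw [← hPP]]
  have hfμ : ∫ u, f u ∂μ = 1 := hf_int
  have hgμ : ∫ v, g v ∂μ = 1 := hg_int
  -- integrabilities
  have hπ2 : Integrable (fun x => (π x)^2) P := by rw [← hPP]; exact hπ_sq
  have hf2 : Integrable (fun u => (f u)^2) μ := hf_sq
  have hg2 : Integrable (fun v => (g v)^2) μ := hg_sq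
  have hπm : AEStronglyMeasurable π P := hπ_meas.aestronglyMeasurable
  have hIπ : Integrable π P := by
    refine Integrable.mono' ((hπ2.add (integrable_const 1)).div_const 2) hπm ?_
    filter_upwards with x
    have := abs_mul_le_half (π x) 1
    simpa using this
  have hIf : Integrable f μ := by
    refine Integrable.mono' ((hf2.add (integrable_const 1)).div_const 2)
      hf_meas.aestronglyMeasurable ?_
    filter_upwards with x
    have := abs_mul_le_half (f x) 1
    simpa using this
  have hIg : Integrable g μ := by
    refine Integrable.mono' ((hg2.add (integrable_const 1)).div_const 2)
      hg_meas.aestronglyMeasurable ?_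
    filter_upwards with x
    have := abs_mul_le_half (g x) 1
    simpa using this
  have hIf1 : Integrable (fun x : ℝ × ℝ => f x.1) P := by
    have := hIf.mul_prod (integrable_const (1:ℝ)) (ν := μ)
    simpa using this
  have hIg2 : Integrable (fun x : ℝ × ℝ => g x.2) P := by
    have := (integrable_const (1:ℝ) : Integrable _ μ).mul_prod hIg
    simpa using this
  have hIf1sq : Integrable (fun x : ℝ × ℝ => (f x.1)^2) P := by
    have := hf2.mul_prod (integrable_const (1:ℝ)) (ν := μ)
    simpa using this
  have hIg2sq : Integrable (fun x : ℝ × ℝ => (g x.2)^2) P := by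
    have := (integrable_const (1:ℝ) : Integrable _ μ).mul_prod hg2
    simpa using this
  have hIfg : Integrable (fun x : ℝ × ℝ => f x.1 * g x.2) P := hIf.mul_prod hIg
  have hIπf : Integrable (fun x : ℝ × ℝ => π x * f x.1) P := by
    refine Integrable.mono' ((hπ2.add hIf1sq).div_const 2)
      (hπm.mul (hf_meas.comp measurable_fst).aestronglyMeasurable) ?_
    filter_upwards with x using abs_mul_le_half (π x) (f x.1)
  have hIπg : Integrable (fun x : ℝ × ℝ => π x * g x.2) P := by
    refine Integrable.mono' ((hπ2.add hIg2sq).div_const 2)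
      (hπm.mul (hg_meas.comp measurable_snd).aestronglyMeasurable) ?_
    filter_upwards with x using abs_mul_le_half (π x) (g x.2)
  set c : ℝ × ℝ → ℝ := fun x => f x.1 + g x.2 - 1 with hc
  have hIc : Integrable c P := (hIf1.add hIg2).sub (integrable_const 1)
  have hIc2 : Integrable (fun x => (c x)^2) P := by
    have : (fun x => (c x)^2) = fun x : ℝ × ℝ =>
        (f x.1)^2 + (g x.2)^2 + 1 + 2*(f x.1 * g x.2) - 2*(f x.1) - 2*(g x.2) := by
      funext x; rw [hc]; ring
    rw [this]
    exact ((((hIf1sq.add hIg2sq).add (integrable_const 1)).add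
      (hIfg.const_mul 2)).sub (hIf1.const_mul 2)).sub (hIg2.const_mul 2)
  have hIπc : Integrable (fun x => π x * c x) P := by
    have : (fun x => π x * c x) = fun x : ℝ × ℝ =>
        π x * f x.1 + π x * g x.2 - π x := by
      funext x; rw [hc]; ring
    rw [this]
    exact (hIπf.add hIπg).sub hIπ
  -- key integral computations
  have E1 : ∫ x, π x ∂P = 1 := by
    rw [hP, integral_prod π hIπ]
    rw [← hfμ]
    exact integral_congr_ae hπ_row
  have E2 : ∫ x, π x * f x.1 ∂P = ∫ u, (f u)^2 ∂μ := by
    rw [hP, integral_prod _ hIπf]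
    refine integral_congr_ae ?_
    filter_upwards [hπ_row] with u hu
    rw [integral_mul_const, hu]; ring
  have E3 : ∫ x, π x * g x.2 ∂P = ∫ v, (g v)^2 ∂μ := by
    rw [hP, integral_prod_symm _ hIπg]
    refine integral_congr_ae ?_
    filter_upwards [hπ_col] with v hv
    rw [integral_mul_const, hv]; ring
  have hPprob : IsProbabilityMeasure P := by rw [hP]; infer_instance
  have Ef1 : ∫ x, f x.1 ∂P = 1 := by
    rw [hP, integral_fun_fst, probReal_univ]; simp [hfμ]
  have Eg2 : ∫ x, g x.2 ∂P = 1 := by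
    rw [hP, integral_fun_snd, probReal_univ]; simp [hgμ]
  have Ef1sq : ∫ x, (f x.1)^2 ∂P = ∫ u, (f u)^2 ∂μ := by
    have h := integral_fun_fst (μ := μ) (ν := μ) (fun u => (f u)^2)
    rw [probReal_univ] at h; simpa using h
  have Eg2sq : ∫ x, (g x.2)^2 ∂P = ∫ v, (g v)^2 ∂μ := by
    have h := integral_fun_snd (μ := μ) (ν := μ) (fun v => (g v)^2)
    rw [probReal_univ] at h; simpa using h
  have Efg : ∫ x, f x.1 * g x.2 ∂P = 1 := by
    rw [hP, integral_prod_mul, hfμ, hgμ]; norm_num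
  have Eπc : ∫ x, π x * c x ∂P = ∫ u, (f u)^2 ∂μ + ∫ v, (g v)^2 ∂μ - 1 := by
    have h : (fun x => π x * c x) = fun x : ℝ × ℝ =>
        π x * f x.1 + π x * g x.2 - π x := by funext x; rw [hc]; ring
    have C1 : Integrable (fun x : ℝ × ℝ => π x * f x.1 + π x * g x.2) P := hIπf.add hIπg
    rw [h, integral_sub C1 hIπ, integral_add hIπf hIπg, E1, E2, E3]
  have Ec2 : ∫ x, (c x)^2 ∂P = ∫ u, (f u)^2 ∂μ + ∫ v, (g v)^2 ∂μ - 1 := by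
    have h : (fun x => (c x)^2) = fun x : ℝ × ℝ =>
        (f x.1)^2 + (g x.2)^2 + 1 + 2*(f x.1 * g x.2) - 2*(f x.1) - 2*(g x.2) := by
      funext x; rw [hc]; ring
    have A1 : Integrable (fun x : ℝ × ℝ => (f x.1)^2 + (g x.2)^2) P := hIf1sq.add hIg2sq
    have A2 : Integrable (fun x : ℝ × ℝ => (f x.1)^2 + (g x.2)^2 + 1) P :=
      A1.add (integrable_const 1)
    have A3 : Integrable (fun x : ℝ × ℝ => 2*(f x.1 * g x.2)) P := hIfg.const_mul 2
    have A4 : Integrable (fun x : ℝ × ℝ =>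
        (f x.1)^2 + (g x.2)^2 + 1 + 2*(f x.1 * g x.2)) P := A2.add A3
    have A5 : Integrable (fun x : ℝ × ℝ => 2*(f x.1)) P := hIf1.const_mul 2
    have A6 : Integrable (fun x : ℝ × ℝ =>
        (f x.1)^2 + (g x.2)^2 + 1 + 2*(f x.1 * g x.2) - 2*(f x.1)) P := A4.sub A5
    have A7 : Integrable (fun x : ℝ × ℝ => 2*(g x.2)) P := hIg2.const_mul 2
    rw [h, integral_sub A6 A7, integral_sub A4 A5, integral_add A2 A3,
      integral_add A1 (integrable_const 1),
      integral_add hIf1sq hIg2sq,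
      integral_const_mul, integral_const_mul, integral_const_mul,
      Ef1sq, Eg2sq, Efg, Ef1, Eg2, integral_const, probReal_univ]
    simp
    ring
  -- conclusion
  have hsq : 0 ≤ ∫ x, (π x - c x)^2 ∂P := integral_nonneg (fun x => sq_nonneg _)
  have hexp : ∫ x, (π x - c x)^2 ∂P
      = ∫ x, (π x)^2 ∂P - 2 * ∫ x, π x * c x ∂P + ∫ x, (c x)^2 ∂P := by
    have h : (fun x => (π x - c x)^2) = fun x =>
        (π x)^2 - 2*(π x * c x) + (c x)^2 := by funext x; ring
    have B1 : Integrable (fun x => 2*(π x * c x)) P := hIπc.const_mul 2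
    have B2 : Integrable (fun x => (π x)^2 - 2*(π x * c x)) P := hπ2.sub B1
    rw [h, integral_add B2 hIc2, integral_sub hπ2 B1, integral_const_mul]
  rw [ge_iff_le]
  have : ∫ x, π x * c x ∂P = ∫ x, (c x)^2 ∂P := by rw [Eπc, Ec2]
  nlinarith [hsq, hexp]
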